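/- An irreflexive oriented graph G has an ios-injective homomorphism to the transitive tournament T_2 if and only if none of H_3, H_3^c and P_3 is a subgraph of G, that is, if and only if G contains no oriented path on three vertices. -/

import Mathlib

/-- A homomorphism of directed graphs (given as binary relations). -/
def IsHom {A : Type} {B : Type} (R : A → A → Prop) (S : B → B → Prop) (f : A → B) : Prop :=
  ∀ x y, R x y → S (f x) (f y)

/-- ios-injectivity: injective on in-neighbourhoods and on out-neighbourhoods separately. -/
def IosInj {A : Type} {B : Type} (R : A → A → Prop) (f : A → B) : Prop :=
  ∀ x : A, Set.InjOn f {y | R y x} ∧ Set.InjOn f {y | R x y}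

/-- iot-injectivity: injective on the union of in- and out-neighbourhoods. -/
def IotInj {A : Type} {B : Type} (R : A → A → Prop) (f : A → B) : Prop :=
  ∀ x : A, Set.InjOn f ({y | R y x} ∪ {y | R x y})

/-- An oriented graph: between two distinct vertices at most one arc. -/
def IsOriented {A : Type} (R : A → A → Prop) : Prop :=
  ∀ x y, x ≠ y → ¬(R x y ∧ R y x)

/-- Irreflexive (no loops). -/
def NoLoops {A : Type} (R : A → A → Prop) : Prop := ∀ x, ¬ R x x

/-- `R` is (isomorphic to) a subgraph of `S`: an injective arc-preserving map. -/
def Subg {A : Type} {B : Type} (R : A → A → Prop) (S : B → B → Prop) : Prop :=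
  ∃ g : A → B, Function.Injective g ∧ IsHom R S g

/-- There exists an ios-injective homomorphism of `R` to `S`. -/
def IosHomEx {A : Type} {B : Type} (R : A → A → Prop) (S : B → B → Prop) : Prop :=
  ∃ g : A → B, IsHom R S g ∧ IosInj R g

/-- There exists an iot-injective homomorphism of `R` to `S`. -/
def IotHomEx {A : Type} {B : Type} (R : A → A → Prop) (S : B → B → Prop) : Prop :=
  ∃ g : A → B, IsHom R S g ∧ IotInj R g

/-- Converse (all arcs reversed). -/
def convRel {A : Type} (R : A → A → Prop) : A → A → Prop := fun x y => R y x

/-- Transitive tournament `T_n`. -/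
def TTrel (n : ℕ) : Fin n → Fin n → Prop := fun i j => i < j

/-- Reflexive transitive tournament `T_2^r`. -/
def T2r : Fin 2 → Fin 2 → Prop := fun i j => i ≤ j

/-- Reflexive one-vertex tournament `T_1^r`. -/
def T1r : PUnit → PUnit → Prop := fun _ _ => True

/-- Directed path `P_N` on `N` vertices. -/
def DPathRel (N : ℕ) : Fin N → Fin N → Prop := fun x y => (y : ℕ) = (x : ℕ) + 1

/-- Directed cycle `C_m` on `m` vertices. -/
def DCycRel (m : ℕ) : Fin m → Fin m → Prop := fun x y => (y : ℕ) = ((x : ℕ) + 1) % m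

/-- Oriented path on `n+1` vertices: edge `t` (between `v_t` and `v_{t+1}`) is
oriented forwards iff `σ t = true`. -/
def OPathRel (n : ℕ) (σ : ℕ → Bool) : Fin (n + 1) → Fin (n + 1) → Prop :=
  fun x y => ∃ t : ℕ, t < n ∧
    ((σ t = true ∧ (x : ℕ) = t ∧ (y : ℕ) = t + 1) ∨
     (σ t = false ∧ (x : ℕ) = t + 1 ∧ (y : ℕ) = t))

/-- Oriented cycle on `m` vertices: edge `t` (between `v_t` and `v_{t+1 mod m}`) is
oriented forwards iff `σ t = true`. -/
def OCycRel (m : ℕ) (σ : ℕ → Bool) : Fin m → Fin m → Prop :=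
  fun x y => ∃ t : ℕ, t < m ∧
    ((σ t = true ∧ (x : ℕ) = t ∧ (y : ℕ) = (t + 1) % m) ∨
     (σ t = false ∧ (x : ℕ) = (t + 1) % m ∧ (y : ℕ) = t))

/-- The hat `H_3`: arcs `v_0 → v_1` and `v_2 → v_1`. -/
def H3rel : Fin 3 → Fin 3 → Prop := fun i j => (i = 0 ∧ j = 1) ∨ (i = 2 ∧ j = 1)

/-- `H_4`: arcs `h_0 → h_3`, `h_1 → h_3`, `h_2 → h_3`. -/
def H4rel : Fin 4 → Fin 4 → Prop := fun i j => (i = 0 ∨ i = 1 ∨ i = 2) ∧ j = 3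

/-- `A_4`: arcs `h_0 → h_2`, `h_1 → h_2`, `h_2 → h_3`. -/
def A4rel : Fin 4 → Fin 4 → Prop := fun i j => ((i = 0 ∨ i = 1) ∧ j = 2) ∨ (i = 2 ∧ j = 3)

/-- `H_5`: two directed paths of length two with a common initial vertex `0`:
arcs `0→1`, `1→2`, `0→3`, `3→4`. -/
def H5rel : Fin 5 → Fin 5 → Prop :=
  fun i j => (i = 0 ∧ j = 1) ∨ (i = 1 ∧ j = 2) ∨ (i = 0 ∧ j = 3) ∨ (i = 3 ∧ j = 4)

/-- `B_2`: arcs `a→b`, `c→b`, `c→d`, `e→d` (vertices `a,b,c,d,e = 0,1,2,3,4`). -/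
def B2rel : Fin 5 → Fin 5 → Prop :=
  fun i j => (i = 0 ∧ j = 1) ∨ (i = 2 ∧ j = 1) ∨ (i = 2 ∧ j = 3) ∨ (i = 4 ∧ j = 3)

/-- `X_2`: orientation of `K_{1,4}` with centre `0` of in-degree 2 and out-degree 2:
arcs `1→0`, `2→0`, `0→3`, `0→4`. -/
def X2rel : Fin 5 → Fin 5 → Prop :=
  fun i j => ((i = 1 ∨ i = 2) ∧ j = 0) ∨ (i = 0 ∧ (j = 3 ∨ j = 4))

/-- An orientation of the star `K_{1,3}`: centre `none`, leaves `some i`;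
edge `i` points away from the centre iff `ε i = true`. -/
def starRel (ε : Fin 3 → Bool) : Option (Fin 3) → Option (Fin 3) → Prop :=
  fun u v => ∃ i : Fin 3,
    (ε i = true ∧ u = none ∧ v = some i) ∨ (ε i = false ∧ u = some i ∧ v = none)

/-- An oriented `k`-colouring: for arcs `xy` and `vw`, `f x = f w → f y ≠ f v`. -/
def OrCol {A : Type} (R : A → A → Prop) {k : ℕ} (f : A → Fin k) : Prop :=
  ∀ x y v w, R x y → R v w → f x = f w → f y ≠ f v

/-- Proper: distinct adjacent vertices get different colours. -/
def ProperCol {A : Type} {B : Type} (R : A → A → Prop) (f : A → B) : Prop :=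
  ∀ x y, R x y → x ≠ y → f x ≠ f y

/-- Disjoint union of two directed graphs. -/
def sumRel {A B : Type} (R : A → A → Prop) (S : B → B → Prop) : A ⊕ B → A ⊕ B → Prop
  | Sum.inl a, Sum.inl a' => R a a'
  | Sum.inr b, Sum.inr b' => S b b'
  | _, _ => False

/-- Net-length of the oriented cycle on `m` vertices with orientation `σ`:
number of forwards arcs minus number of backwards arcs. -/
def netLen (m : ℕ) (σ : ℕ → Bool) : ℤ :=
  (((Finset.range m).filter fun t => σ t = true).card : ℤ) -
    (((Finset.range m).filter fun t => σ t = false).card : ℤ)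

/-- Undirected connectivity relation of a directed graph. -/
def UConn {V : Type} (E : V → V → Prop) : V → V → Prop :=
  Relation.ReflTransGen (fun a b => E a b ∨ E b a)

/-- The relation induced on the connected component of `x`. -/
def componentRel {V : Type} (E : V → V → Prop) (x : V) :
    {y : V // UConn E x y} → {y : V // UConn E x y} → Prop :=
  fun a b => E a.val b.val

/-- Isomorphism of directed graphs. -/
def IsoRel {A B : Type} (R : A → A → Prop) (S : B → B → Prop) : Prop :=
  ∃ e : A ≃ B, ∀ a a', R a a' ↔ S (e a) (e a')

/-- An alternating matching in the oriented path on `n+1` vertices (edges `0,…,n-1`,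
orientations `σ`): `μ t` means edge `t` is in the matching.  It is a matching,
saturates every internal (degree-two) vertex, and consecutive matching edges have
opposite orientations. -/
def PathAltMatching (n : ℕ) (σ : ℕ → Bool) (μ : ℕ → Prop) : Prop :=
  (∀ t, μ t → t < n) ∧
  (∀ t, ¬(μ t ∧ μ (t + 1))) ∧
  (∀ v, 1 ≤ v → v + 1 ≤ n → (μ (v - 1) ∨ μ v)) ∧
  (∀ t t', μ t → μ t' → t < t' → (∀ s, t < s → s < t' → ¬ μ s) → σ t ≠ σ t')

/-- An alternating matching in the oriented cycle on `m` vertices (edges mod `m`):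
a matching saturating every vertex whose successive edges (cyclically) have
opposite orientations. -/
def CycAltMatching (m : ℕ) (σ : ℕ → Bool) (μ : ℕ → Prop) : Prop :=
  (∀ t, μ t → t < m) ∧
  (∀ t, t < m → ¬(μ t ∧ μ ((t + 1) % m))) ∧
  (∀ v, v < m → (μ v ∨ μ ((v + m - 1) % m))) ∧
  (∀ t d, t < m → 0 < d → d < m → μ t → μ ((t + d) % m) →
    (∀ s, 0 < s → s < d → ¬ μ ((t + s) % m)) → σ t ≠ σ ((t + d) % m))

private lemma inj3 {V : Type} (a x b : V) (h1 : a ≠ x) (h2 : b ≠ x) (h3 : a ≠ b) :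
    Function.Injective ![a, x, b] := by
  intro i j hij
  fin_cases i <;> fin_cases j <;> simp_all

private lemma opath_arcs (σ : ℕ → Bool) (x y : Fin 3) (h : OPathRel 2 σ x y) :
    (σ 0 = true ∧ x = 0 ∧ y = 1) ∨ (σ 0 = false ∧ x = 1 ∧ y = 0) ∨
    (σ 1 = true ∧ x = 1 ∧ y = 2) ∨ (σ 1 = false ∧ x = 2 ∧ y = 1) := by
  obtain ⟨t, ht, h⟩ := h
  interval_cases t <;>
    rcases h with ⟨hs, hx, hy⟩ | ⟨hs, hx, hy⟩ <;>
    fin_cases x <;> fin_cases y <;> simp_all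

/-- An irreflexive oriented graph `G` has an ios-injective homomorphism
to `T_2` iff none of `H_3`, `H_3^c`, `P_3` is a subgraph of `G`, that is, iff `G`
contains no oriented path on three vertices. -/
theorem stmt5 {V : Type} (E : V → V → Prop) (hor : IsOriented E) (hirr : NoLoops E) :
    ((∃ f : V → Fin 2, IsHom E (TTrel 2) f ∧ IosInj E f) ↔
        ¬ (Subg H3rel E ∨ Subg (convRel H3rel) E ∨ Subg (DPathRel 3) E)) ∧
    (¬ (Subg H3rel E ∨ Subg (convRel H3rel) E ∨ Subg (DPathRel 3) E) ↔
        ¬ ∃ σ : ℕ → Bool, Subg (OPathRel 2 σ) E) := by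
    classical
  have hH3 : Subg H3rel E → ∃ a x b : V, a ≠ b ∧ E a x ∧ E b x := by
    rintro ⟨g, hg, hhom⟩
    exact ⟨g 0, g 1, g 2, fun h => absurd (hg h) (by decide),
      hhom 0 1 (Or.inl ⟨rfl, rfl⟩), hhom 2 1 (Or.inr ⟨rfl, rfl⟩)⟩
  have hH3c : Subg (convRel H3rel) E → ∃ a x b : V, a ≠ b ∧ E x a ∧ E x b := by
    rintro ⟨g, hg, hhom⟩
    exact ⟨g 0, g 1, g 2, fun h => absurd (hg h) (by decide),
      hhom 1 0 (Or.inl ⟨rfl, rfl⟩), hhom 1 2 (Or.inr ⟨rfl, rfl⟩)⟩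
  have hP3 : Subg (DPathRel 3) E → ∃ a x b : V, a ≠ b ∧ E a x ∧ E x b := by
    rintro ⟨g, hg, hhom⟩
    exact ⟨g 0, g 1, g 2, fun h => absurd (hg h) (by decide),
      hhom 0 1 (by simp [DPathRel]), hhom 1 2 (by simp [DPathRel])⟩
  have mkH3 : ∀ a x b : V, a ≠ b → E a x → E b x → Subg H3rel E := by
    intro a x b hab hax hbx
    refine ⟨![a, x, b], inj3 a x b (fun h => hirr x (h ▸ hax))
      (fun h => hirr x (h ▸ hbx)) hab, ?_⟩
    rintro i j (⟨hi, hj⟩ | ⟨hi, hj⟩) <;> subst hi <;> subst hj <;> simpa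
  have mkH3c : ∀ a x b : V, a ≠ b → E x a → E x b → Subg (convRel H3rel) E := by
    intro a x b hab hax hbx
    refine ⟨![a, x, b], inj3 a x b (fun h => hirr x (h ▸ hax))
      (fun h => hirr x (h ▸ hbx)) hab, ?_⟩
    rintro i j (⟨hj, hi⟩ | ⟨hj, hi⟩) <;> subst hi <;> subst hj <;> simpa
  have mkP3 : ∀ a x b : V, E a x → E x b → Subg (DPathRel 3) E := by
    intro a x b hax hxb
    have hax' : a ≠ x := fun h => hirr x (h ▸ hax)
    have hxb' : x ≠ b := fun h => hirr x (h ▸ hxb)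
    have hab : a ≠ b := by
      rintro rfl
      exact hor a x hax' ⟨hax, hxb⟩
    refine ⟨![a, x, b], inj3 a x b hax' (Ne.symm hxb') hab, ?_⟩
    intro i j hij
    fin_cases i <;> fin_cases j <;> simp_all [DPathRel]
  constructor
  · constructor
    · rintro ⟨f, hf, hinj⟩ h
      rcases h with h | h | h
      · obtain ⟨a, x, b, hab, hax, hbx⟩ := hH3 h
        have h1 : (f a : ℕ) < f x := hf a x hax
        have h2 : (f b : ℕ) < f x := hf b x hbx
        have hfa : f a = f b := by
          have := (f a).isLt; have := (f b).isLt; have := (f x).isLt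
          exact Fin.ext (by omega)
        exact hab ((hinj x).1 hax hbx hfa)
      · obtain ⟨a, x, b, hab, hax, hbx⟩ := hH3c h
        have h1 : (f x : ℕ) < f a := hf x a hax
        have h2 : (f x : ℕ) < f b := hf x b hbx
        have hfa : f a = f b := by
          have := (f a).isLt; have := (f b).isLt; have := (f x).isLt
          exact Fin.ext (by omega)
        exact hab ((hinj x).2 hax hbx hfa)
      · obtain ⟨a, x, b, hab, hax, hxb⟩ := hP3 h
        have h1 : (f a : ℕ) < f x := hf a x hax
        have h2 : (f x : ℕ) < f b := hf x b hxb
        have := (f b).isLt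
        omega
    · intro h
      push_neg at h
      obtain ⟨h3, h3c, hp3⟩ := h
      refine ⟨fun v => if ∃ u, E u v then 1 else 0, ?_, ?_⟩
      · intro x y hxy
        have hy : (∃ u, E u y) := ⟨x, hxy⟩
        have hx : ¬ ∃ u, E u x := by
          rintro ⟨u, hux⟩
          exact hp3 (mkP3 u x y hux hxy)
        simp only [hy, hx, if_true, if_false]
        show TTrel 2 0 1; simp [TTrel]
      · intro x
        constructor
        · intro a ha b hb _
          by_contra hab
          exact h3 (mkH3 a x b hab ha hb)
        · intro a ha b hb _
          by_contra hab
          exact h3c (mkH3c a x b hab ha hb)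
  · constructor
    · rintro h ⟨σ, g, hg, hhom⟩
      have harc : ∀ x y : Fin 3, OPathRel 2 σ x y → E (g x) (g y) := hhom
      push_neg at h
      obtain ⟨h3, h3c, hp3⟩ := h
      have hgne : ∀ i j : Fin 3, i ≠ j → g i ≠ g j := fun i j hij h => hij (hg h)
      cases hσ0 : σ 0 <;> cases hσ1 : σ 1
      · -- both false : arcs (1,0), (2,1) : path g2 → g1 → g0
        exact hp3 (mkP3 (g 2) (g 1) (g 0)
          (harc 2 1 ⟨1, by norm_num, Or.inr ⟨hσ1, by norm_num⟩⟩)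
          (harc 1 0 ⟨0, by norm_num, Or.inr ⟨hσ0, by norm_num⟩⟩))
      · -- σ0 = false, σ1 = true : arcs (1,0), (1,2) : H3c
        exact h3c (mkH3c (g 0) (g 1) (g 2) (hgne 0 2 (by decide))
          (harc 1 0 ⟨0, by norm_num, Or.inr ⟨hσ0, by norm_num⟩⟩)
          (harc 1 2 ⟨1, by norm_num, Or.inl ⟨hσ1, by norm_num⟩⟩))
      · -- σ0 = true, σ1 = false : arcs (0,1), (2,1) : H3
        exact h3 (mkH3 (g 0) (g 1) (g 2) (hgne 0 2 (by decide))
          (harc 0 1 ⟨0, by norm_num, Or.inl ⟨hσ0, by norm_num⟩⟩)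
          (harc 2 1 ⟨1, by norm_num, Or.inr ⟨hσ1, by norm_num⟩⟩))
      · -- both true : arcs (0,1), (1,2) : P3
        exact hp3 (mkP3 (g 0) (g 1) (g 2)
          (harc 0 1 ⟨0, by norm_num, Or.inl ⟨hσ0, by norm_num⟩⟩)
          (harc 1 2 ⟨1, by norm_num, Or.inl ⟨hσ1, by norm_num⟩⟩))
    · intro h hsub
      rcases hsub with ⟨g, hg, hhom⟩ | ⟨g, hg, hhom⟩ | ⟨g, hg, hhom⟩
      · refine h ⟨fun t => decide (t = 0), g, hg, ?_⟩
        intro x y hxy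
        rcases opath_arcs _ x y hxy with ⟨hs, rfl, rfl⟩ | ⟨hs, rfl, rfl⟩ |
          ⟨hs, rfl, rfl⟩ | ⟨hs, rfl, rfl⟩
        · exact hhom 0 1 (Or.inl ⟨rfl, rfl⟩)
        · simp at hs
        · simp at hs
        · exact hhom 2 1 (Or.inr ⟨rfl, rfl⟩)
      · refine h ⟨fun t => decide (t = 1), g, hg, ?_⟩
        intro x y hxy
        rcases opath_arcs _ x y hxy with ⟨hs, rfl, rfl⟩ | ⟨hs, rfl, rfl⟩ |
          ⟨hs, rfl, rfl⟩ | ⟨hs, rfl, rfl⟩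
        · simp at hs
        · exact hhom 1 0 (Or.inl ⟨rfl, rfl⟩)
        · exact hhom 1 2 (Or.inr ⟨rfl, rfl⟩)
        · simp at hs
      · refine h ⟨fun _ => true, g, hg, ?_⟩
        intro x y hxy
        rcases opath_arcs _ x y hxy with ⟨hs, rfl, rfl⟩ | ⟨hs, rfl, rfl⟩ |
          ⟨hs, rfl, rfl⟩ | ⟨hs, rfl, rfl⟩
        · exact hhom 0 1 (by simp [DPathRel])
        · simp at hs
        · exact hhom 1 2 (by simp [DPathRel])
        · simp at hs
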